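/- Let F_q be a finite field and n ≤ q. Given pairs (x_i, y_i) ∈ F_q^k × F_q^k for 1 ≤ i ≤ n such that x_i · y_i ≠ 0 for every i, there exists a linear combination b of the vectors x_1, …, x_n such that b · y_i ≠ 0 for all 1 ≤ i ≤ n. -/

import Mathlib

open Matrix

/-- Lemma (Jaggi et al.): over a finite field `F` with `n ≤ |F|`, given pairs
`(xᵢ, yᵢ)` of vectors in `Fᵏ` with `xᵢ · yᵢ ≠ 0` for all `i`, there is a linear
combination `b = Σ αⱼ xⱼ` with `b · yᵢ ≠ 0` for all `i`. -/
theorem exists_linear_combination_nonzero_dot {F : Type*} [Field F] [Fintype F]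
    {k n : ℕ} (hn : n ≤ Fintype.card F)
    (x y : Fin n → (Fin k → F)) (h : ∀ i, x i ⬝ᵥ y i ≠ 0) :
    ∃ α : Fin n → F, ∀ i, (∑ j, α j • x j) ⬝ᵥ y i ≠ 0 := by
  classical
  suffices H : ∀ m, m ≤ n → ∃ α : Fin n → F,
      (∀ j : Fin n, m ≤ (j : ℕ) → α j = 0) ∧
      ∀ i : Fin n, (i : ℕ) < m → (∑ j, α j • x j) ⬝ᵥ y i ≠ 0 by
    obtain ⟨α, _, hα⟩ := H n le_rfl
    exact ⟨α, fun i => hα i i.isLt⟩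
  intro m
  induction m with
  | zero =>
    intro _
    exact ⟨0, fun _ _ => rfl, fun i hi => absurd hi (Nat.not_lt_zero _)⟩
  | succ m ih =>
    intro hm
    obtain ⟨α, hsupp, hα⟩ := ih (Nat.le_of_succ_le hm)
    have hmn : m < n := hm
    set M : Fin n := ⟨m, hmn⟩ with hM
    set b : Fin k → F := ∑ j, α j • x j with hb
    -- candidates indexed by Option F
    set cand : Option F → (Fin k → F) := fun o => match o with
      | none => x M
      | some t => b + t • x M with hcand
    -- for each i ≤ m, at most one candidate is killed
    have hkey : ∀ i : Fin n, (i : ℕ) ≤ m →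
        ∀ o₁ ∈ Finset.univ.filter (fun o => cand o ⬝ᵥ y i = 0),
        ∀ o₂ ∈ Finset.univ.filter (fun o => cand o ⬝ᵥ y i = 0), o₁ = o₂ := by
      intro i hi o₁ ho₁ o₂ ho₂
      simp only [Finset.mem_filter, Finset.mem_univ, true_and] at ho₁ ho₂
      have hne : ¬(b ⬝ᵥ y i = 0 ∧ x M ⬝ᵥ y i = 0) := by
        rcases lt_or_eq_of_le hi with hlt | heq
        · exact fun hc => hα i hlt hc.1
        · intro hc
          have : i = M := Fin.ext heq
          exact h M (this ▸ hc.2)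
      have hsome : ∀ t : F, cand (some t) ⬝ᵥ y i = 0 →
          b ⬝ᵥ y i + t * (x M ⬝ᵥ y i) = 0 := by
        intro t ht
        simpa [hcand, add_dotProduct, smul_dotProduct, smul_eq_mul] using ht
      match o₁, o₂ with
      | none, none => rfl
      | none, some t =>
        exfalso
        have hx : x M ⬝ᵥ y i = 0 := ho₁
        have := hsome t ho₂
        rw [hx, mul_zero, add_zero] at this
        exact hne ⟨this, hx⟩
      | some t, none =>
        exfalso
        have hx : x M ⬝ᵥ y i = 0 := ho₂
        have := hsome t ho₁
        rw [hx, mul_zero, add_zero] at this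
        exact hne ⟨this, hx⟩
      | some t₁, some t₂ =>
        have h1 := hsome t₁ ho₁
        have h2 := hsome t₂ ho₂
        by_cases hx : x M ⬝ᵥ y i = 0
        · exfalso
          rw [hx, mul_zero, add_zero] at h1
          exact hne ⟨h1, hx⟩
        · have : t₁ * (x M ⬝ᵥ y i) = t₂ * (x M ⬝ᵥ y i) := by
            linear_combination h1 - h2
          have : t₁ = t₂ := mul_right_cancel₀ hx this
          rw [this]
    -- the bad set
    set B : Finset (Option F) :=
      (Finset.Iic M).biUnion (fun i => Finset.univ.filter (fun o => cand o ⬝ᵥ y i = 0))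
      with hB
    have hBcard : B.card < Fintype.card (Option F) := by
      have h1 : B.card ≤ ∑ i ∈ Finset.Iic M, 1 := by
        refine le_trans (Finset.card_biUnion_le) ?_
        refine Finset.sum_le_sum fun i hi => ?_
        have hi' : (i : ℕ) ≤ m := by
          have := Finset.mem_Iic.mp hi
          exact this
        exact Finset.card_le_one.mpr (hkey i hi')
      have h2 : (Finset.Iic M).card = m + 1 := by
        simp [Fin.card_Iic, hM]
      have h3 : B.card ≤ m + 1 := by simpa [h2] using h1
      have : m + 1 ≤ Fintype.card F := le_trans hm hn
      calc B.card ≤ m + 1 := h3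
        _ ≤ Fintype.card F := this
        _ < Fintype.card F + 1 := Nat.lt_succ_self _
        _ = Fintype.card (Option F) := (Fintype.card_option).symm
    have hBne : B ≠ Finset.univ := by
      intro hcon
      rw [hcon, Finset.card_univ] at hBcard
      exact lt_irrefl _ hBcard
    obtain ⟨o, ho⟩ : ∃ o : Option F, o ∉ B := by
      by_contra hcon
      push_neg at hcon
      exact hBne (Finset.eq_univ_iff_forall.mpr hcon)
    have hgood : ∀ i : Fin n, (i : ℕ) ≤ m → cand o ⬝ᵥ y i ≠ 0 := by
      intro i hi hzero
      exact ho (Finset.mem_biUnion.mpr ⟨i, Finset.mem_Iic.mpr hi,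
        Finset.mem_filter.mpr ⟨Finset.mem_univ _, hzero⟩⟩)
    -- build the new coefficients
    match o with
    | none =>
      refine ⟨fun j => if j = M then 1 else 0, ?_, ?_⟩
      · intro j hj
        have : j ≠ M := by
          intro hc
          have : (j : ℕ) = m := by rw [hc]
          omega
        simp [this]
      · intro i hi
        have hsum : (∑ j, (if j = M then (1:F) else 0) • x j) = x M := by
          rw [Finset.sum_eq_single M]
          · simp
          · intro j _ hj; simp [hj]
          · intro hc; exact absurd (Finset.mem_univ M) hc
        rw [hsum]
        exact hgood i (Nat.lt_succ_iff.mp hi)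
    | some t =>
      refine ⟨fun j => if j = M then t else α j, ?_, ?_⟩
      · intro j hj
        have hne : j ≠ M := by
          intro hc
          have : (j : ℕ) = m := by rw [hc]
          omega
        simp only [hne, if_false]
        exact hsupp j (Nat.le_of_succ_le hj)
      · intro i hi
        have hsum : (∑ j, (if j = M then t else α j) • x j) = b + t • x M := by
          have hαM : α M = 0 := hsupp M le_rfl
          have step : ∀ j : Fin n, (if j = M then t else α j) • x j
              = α j • x j + (if j = M then t • x M else 0) := by
            intro j
            by_cases hj : j = M
            · subst hj; simp [hαM]
            · simp [hj]
          rw [Finset.sum_congr rfl (fun j _ => step j), Finset.sum_add_distrib]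
          rw [Finset.sum_ite_eq' Finset.univ M (fun _ => t • x M)]
          simp [hb]
        rw [hsum]
        exact hgood i (Nat.lt_succ_iff.mp hi)
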